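/- Let D ⊆ ℂ^k be a bounded open set and K > 0. Let φ and ψ be real-valued C² functions on a neighborhood of the closure of D such that, for all z ∈ D and v ∈ ℂ^k: |φ(z)| ≤ K, |ψ(z)| ≤ K, the operator norms of the real derivatives satisfy ‖Dφ(z)‖ ≤ K and ‖Dψ(z)‖ ≤ K, and the Levi forms satisfy L_φ(z; v) ≥ ‖v‖² and L_ψ(z; v) ≥ ‖v‖². Then for every A ≥ K + K², the two functions on D × D ⊆ ℂ^{2k} given by (z, z') ↦ (φ(z) + A)(ψ(z') + A) and (z, z') ↦ (−φ(z) + A)(ψ(z') − A) have nonnegative Levi form at every point of D × D; that is, they are plurisubharmonic on D × D. -/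

import Mathlib

open Complex

/-- The Levi form of a real-valued `C²` function `ρ` at `z` in the direction `v`: the Laplacian
at `w = 0` of the function `ℂ ∋ w ↦ ρ (z + w • v)`. -/
noncomputable def leviForm {E : Type*} [NormedAddCommGroup E] [NormedSpace ℂ E]
    (ρ : E → ℝ) (z v : E) : ℝ :=
  iteratedFDeriv ℝ 2 (fun w : ℂ => ρ (z + w • v)) 0 ![1, 1] +
  iteratedFDeriv ℝ 2 (fun w : ℂ => ρ (z + w • v)) 0 ![Complex.I, Complex.I]

lemma second_mul (f g : ℂ → ℝ) (s : Set ℂ) (hs : IsOpen s) (h0 : (0:ℂ) ∈ s)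
    (hf : ContDiffOn ℝ 2 f s) (hg : ContDiffOn ℝ 2 g s) (u : ℂ) :
    iteratedFDeriv ℝ 2 (fun w => f w * g w) 0 ![u, u]
      = f 0 * iteratedFDeriv ℝ 2 g 0 ![u, u] + g 0 * iteratedFDeriv ℝ 2 f 0 ![u, u]
        + 2 * (fderiv ℝ f 0 u * fderiv ℝ g 0 u) := by
  have hs0 : s ∈ nhds (0:ℂ) := hs.mem_nhds h0
  have hfd : ∀ w ∈ s, DifferentiableAt ℝ f w := fun w hw =>
    (hf.contDiffAt (hs.mem_nhds hw)).differentiableAt two_ne_zero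
  have hgd : ∀ w ∈ s, DifferentiableAt ℝ g w := fun w hw =>
    (hg.contDiffAt (hs.mem_nhds hw)).differentiableAt two_ne_zero
  have hF : DifferentiableAt ℝ (fderiv ℝ f) 0 :=
    (((hf.fderiv_of_isOpen hs le_rfl).contDiffAt hs0).differentiableAt one_ne_zero)
  have hG : DifferentiableAt ℝ (fderiv ℝ g) 0 :=
    (((hg.fderiv_of_isOpen hs le_rfl).contDiffAt hs0).differentiableAt one_ne_zero)
  have hf0 := hfd 0 h0
  have hg0 := hgd 0 h0
  have heq : fderiv ℝ (fun w => f w * g w) =ᶠ[nhds (0:ℂ)]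
      (fun w => f w • fderiv ℝ g w + g w • fderiv ℝ f w) :=
    Filter.eventually_of_mem hs0 (fun w hw => fderiv_fun_mul (hfd w hw) (hgd w hw))
  rw [iteratedFDeriv_two_apply, heq.fderiv_eq,
    fderiv_fun_add (f := fun w => f w • fderiv ℝ g w) (g := fun w => g w • fderiv ℝ f w)
      (hf0.smul hG) (hg0.smul hF), fderiv_fun_smul hf0 hG, fderiv_fun_smul hg0 hF,
    iteratedFDeriv_two_apply, iteratedFDeriv_two_apply]
  simp only [Matrix.cons_val_zero, Matrix.cons_val_one, Matrix.head_cons,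
    ContinuousLinearMap.add_apply, ContinuousLinearMap.smul_apply,
    ContinuousLinearMap.smulRight_apply, smul_eq_mul]
  ring

lemma lap_add_const (h : ℂ → ℝ) (A : ℝ) (m : Fin 2 → ℂ) :
    iteratedFDeriv ℝ 2 (fun w => h w + A) 0 m = iteratedFDeriv ℝ 2 h 0 m := by
  rw [iteratedFDeriv_two_apply, iteratedFDeriv_two_apply]
  have e : (fderiv ℝ fun w => h w + A) = fderiv ℝ h := funext fun w => fderiv_add_const A
  rw [e]

lemma lap_sub_const (h : ℂ → ℝ) (A : ℝ) (m : Fin 2 → ℂ) :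
    iteratedFDeriv ℝ 2 (fun w => h w - A) 0 m = iteratedFDeriv ℝ 2 h 0 m := by
  rw [iteratedFDeriv_two_apply, iteratedFDeriv_two_apply]
  have e : (fderiv ℝ fun w => h w - A) = fderiv ℝ h := funext fun w => fderiv_sub_const A
  rw [e]

lemma lap_neg_add_const (h : ℂ → ℝ) (A : ℝ) (m : Fin 2 → ℂ) :
    iteratedFDeriv ℝ 2 (fun w => -h w + A) 0 m = -iteratedFDeriv ℝ 2 h 0 m := by
  rw [iteratedFDeriv_two_apply, iteratedFDeriv_two_apply]
  have e : (fderiv ℝ fun w => -h w + A) = fun w => -fderiv ℝ h w := by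
    funext w
    rw [fderiv_add_const, fderiv_fun_neg]
  rw [e, fderiv_fun_neg]
  simp

lemma line_hasFDerivAt {E : Type*} [NormedAddCommGroup E] [NormedSpace ℂ E]
    (z v : E) :
    HasFDerivAt (fun w : ℂ => z + w • v)
      ((ContinuousLinearMap.id ℝ ℂ).smulRight v) 0 := by
  have hid : HasFDerivAt (fun w : ℂ => w) (ContinuousLinearMap.id ℝ ℂ) 0 := hasFDerivAt_id 0
  have hc : HasFDerivAt (fun _ : ℂ => v) (0 : ℂ →L[ℝ] E) 0 := hasFDerivAt_const v 0
  have h := hid.smul hc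
  exact ((hasFDerivAt_const z (0:ℂ)).add h).congr_fderiv (by simp)

lemma line_fderiv {E : Type*} [NormedAddCommGroup E] [NormedSpace ℂ E]
    (φ : E → ℝ) (z v : E) (hφ : DifferentiableAt ℝ φ z) (u : ℂ) :
    fderiv ℝ (fun w : ℂ => φ (z + w • v)) 0 u = fderiv ℝ φ z (u • v) := by
  have hg : HasFDerivAt φ (fderiv ℝ φ z) (z + (0:ℂ) • v) := by
    simpa using hφ.hasFDerivAt
  have h2 := (hg.comp (0:ℂ) (line_hasFDerivAt z v)).fderiv
  rw [show (fun w : ℂ => φ (z + w • v)) = (φ ∘ fun w : ℂ => z + w • v) from rfl, h2]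
  simp

/-- gradient bound: `(Dφ(v))² + (Dφ(Iv))² ≤ (K‖v‖)²`. -/
lemma grad_bound {E : Type*} [NormedAddCommGroup E] [NormedSpace ℂ E]
    (φ : E → ℝ) (z v : E) (K : ℝ) (hK : 0 ≤ K) (hD : ‖fderiv ℝ φ z‖ ≤ K) :
    (fderiv ℝ φ z v) ^ 2 + (fderiv ℝ φ z (Complex.I • v)) ^ 2 ≤ (K * ‖v‖) ^ 2 := by
  set a := fderiv ℝ φ z v with ha
  set b := fderiv ℝ φ z (Complex.I • v) with hb
  set c : ℂ := (a : ℂ) + (b : ℂ) * Complex.I with hc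
  have hsmul : c • v = a • v + b • (Complex.I • v) := by
    rw [hc, add_smul, mul_smul]
    norm_num [Complex.coe_smul]
  have hval : fderiv ℝ φ z (c • v) = a * a + b * b := by
    rw [hsmul, map_add, map_smul, map_smul, ← ha, ← hb]
    simp [smul_eq_mul]
  have hnormc : ‖c‖ ^ 2 = a ^ 2 + b ^ 2 := by
    rw [hc]
    rw [Complex.sq_norm, Complex.normSq_apply]
    simp
    ring
  have hbound : a * a + b * b ≤ K * (‖c‖ * ‖v‖) := by
    rw [← hval]
    calc fderiv ℝ φ z (c • v) ≤ |fderiv ℝ φ z (c • v)| := le_abs_self _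
      _ ≤ ‖fderiv ℝ φ z‖ * ‖c • v‖ := (fderiv ℝ φ z).le_opNorm _
      _ ≤ K * (‖c‖ * ‖v‖) := by
          rw [norm_smul]
          exact mul_le_mul_of_nonneg_right hD (by positivity)
  have hcn : 0 ≤ ‖c‖ := norm_nonneg _
  have hvn : 0 ≤ ‖v‖ := norm_nonneg _
  nlinarith [sq_nonneg (‖c‖ - K * ‖v‖), sq_nonneg a, sq_nonneg b]

/-- Cauchy–Schwarz style cross-term bound. -/
lemma cross_bound (a b a' b' M₁ M₂ : ℝ) (hM₁ : 0 ≤ M₁) (hM₂ : 0 ≤ M₂)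
    (h1 : a ^ 2 + b ^ 2 ≤ M₁ ^ 2) (h2 : a' ^ 2 + b' ^ 2 ≤ M₂ ^ 2) :
    |a * a' + b * b'| ≤ M₁ * M₂ := by
  have ht : (a * a' + b * b') ^ 2 ≤ (M₁ * M₂) ^ 2 := by
    nlinarith [sq_nonneg (a * b' - b * a'), sq_nonneg a, sq_nonneg b, sq_nonneg a', sq_nonneg b']
  have := Real.sqrt_le_sqrt ht
  rw [Real.sqrt_sq_eq_abs, Real.sqrt_sq_eq_abs] at this
  rwa [_root_.abs_of_nonneg (mul_nonneg hM₁ hM₂)] at this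

set_option maxHeartbeats 2000000 in
theorem stmt_7 (k : ℕ) (hk : 1 ≤ k)
    (D : Set (EuclideanSpace ℂ (Fin k))) (hD : IsOpen D) (hDb : Bornology.IsBounded D)
    (K : ℝ) (hK : 0 < K)
    (U : Set (EuclideanSpace ℂ (Fin k))) (hU : IsOpen U) (hDU : closure D ⊆ U)
    (φ ψ : EuclideanSpace ℂ (Fin k) → ℝ)
    (hφ : ContDiffOn ℝ 2 φ U) (hψ : ContDiffOn ℝ 2 ψ U)
    (hφb : ∀ z ∈ D, |φ z| ≤ K) (hψb : ∀ z ∈ D, |ψ z| ≤ K)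
    (hφd : ∀ z ∈ D, ‖fderiv ℝ φ z‖ ≤ K) (hψd : ∀ z ∈ D, ‖fderiv ℝ ψ z‖ ≤ K)
    (hφL : ∀ z ∈ D, ∀ v, ‖v‖ ^ 2 ≤ leviForm φ z v)
    (hψL : ∀ z ∈ D, ∀ v, ‖v‖ ^ 2 ≤ leviForm ψ z v) :
    ∀ A : ℝ, K + K ^ 2 ≤ A → ∀ x ∈ D ×ˢ D,
      ∀ w : EuclideanSpace ℂ (Fin k) × EuclideanSpace ℂ (Fin k),
        0 ≤ leviForm (fun y : EuclideanSpace ℂ (Fin k) × EuclideanSpace ℂ (Fin k) =>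
              (φ y.1 + A) * (ψ y.2 + A)) x w ∧
        0 ≤ leviForm (fun y : EuclideanSpace ℂ (Fin k) × EuclideanSpace ℂ (Fin k) =>
              (-φ y.1 + A) * (ψ y.2 - A)) x w := by
  intro A hA x hx w
  rw [Set.mem_prod] at hx
  obtain ⟨hx1, hx2⟩ := hx
  have hzU : x.1 ∈ U := hDU (subset_closure hx1)
  have hz'U : x.2 ∈ U := hDU (subset_closure hx2)
  have hsm1 : ContDiff ℝ 2 (fun w' : ℂ => w' • w.1) :=
    ((ContinuousLinearMap.id ℝ ℂ).smulRight w.1).contDiff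
  have hsm2 : ContDiff ℝ 2 (fun w' : ℂ => w' • w.2) :=
    ((ContinuousLinearMap.id ℝ ℂ).smulRight w.2).contDiff
  have hline1 : ContDiff ℝ 2 (fun w' : ℂ => x.1 + w' • w.1) := contDiff_const.add hsm1
  have hline2 : ContDiff ℝ 2 (fun w' : ℂ => x.2 + w' • w.2) := contDiff_const.add hsm2
  set s : Set ℂ := ((fun w' : ℂ => x.1 + w' • w.1) ⁻¹' U) ∩
      ((fun w' : ℂ => x.2 + w' • w.2) ⁻¹' U) with hsdef
  have hs : IsOpen s :=
    (hU.preimage hline1.continuous).inter (hU.preimage hline2.continuous)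
  have h0 : (0:ℂ) ∈ s := by
    constructor <;> simp only [Set.mem_preimage, zero_smul, add_zero] <;> assumption
  have hc1 : ContDiffOn ℝ 2 (fun w' : ℂ => φ (x.1 + w' • w.1)) s :=
    hφ.comp hline1.contDiffOn (fun w' hw' => hw'.1)
  have hc2 : ContDiffOn ℝ 2 (fun w' : ℂ => ψ (x.2 + w' • w.2)) s :=
    hψ.comp hline2.contDiffOn (fun w' hw' => hw'.2)
  have hdφ : DifferentiableAt ℝ φ x.1 :=
    (hφ.contDiffAt (hU.mem_nhds hzU)).differentiableAt two_ne_zero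
  have hdψ : DifferentiableAt ℝ ψ x.2 :=
    (hψ.contDiffAt (hU.mem_nhds hz'U)).differentiableAt two_ne_zero
  have e1 : fderiv ℝ (fun w' : ℂ => φ (x.1 + w' • w.1)) 0 1 = fderiv ℝ φ x.1 w.1 := by
    rw [line_fderiv φ x.1 w.1 hdφ 1, one_smul]
  have eI1 : fderiv ℝ (fun w' : ℂ => φ (x.1 + w' • w.1)) 0 I = fderiv ℝ φ x.1 (I • w.1) :=
    line_fderiv φ x.1 w.1 hdφ I
  have e2 : fderiv ℝ (fun w' : ℂ => ψ (x.2 + w' • w.2)) 0 1 = fderiv ℝ ψ x.2 w.2 := by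
    rw [line_fderiv ψ x.2 w.2 hdψ 1, one_smul]
  have eI2 : fderiv ℝ (fun w' : ℂ => ψ (x.2 + w' • w.2)) 0 I = fderiv ℝ ψ x.2 (I • w.2) :=
    line_fderiv ψ x.2 w.2 hdψ I
  have hg1 : (fderiv ℝ φ x.1 w.1) ^ 2 + (fderiv ℝ φ x.1 (I • w.1)) ^ 2 ≤ (K * ‖w.1‖) ^ 2 :=
    grad_bound φ x.1 w.1 K hK.le (hφd x.1 hx1)
  have hg2 : (fderiv ℝ ψ x.2 w.2) ^ 2 + (fderiv ℝ ψ x.2 (I • w.2)) ^ 2 ≤ (K * ‖w.2‖) ^ 2 :=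
    grad_bound ψ x.2 w.2 K hK.le (hψd x.2 hx2)
  have hcross : |fderiv ℝ φ x.1 w.1 * fderiv ℝ ψ x.2 w.2 +
      fderiv ℝ φ x.1 (I • w.1) * fderiv ℝ ψ x.2 (I • w.2)| ≤ (K * ‖w.1‖) * (K * ‖w.2‖) :=
    cross_bound _ _ _ _ _ _ (by positivity) (by positivity) hg1 hg2
  have hcr := abs_le.mp hcross
  have hP : ‖w.1‖ ^ 2 ≤ iteratedFDeriv ℝ 2 (fun w' : ℂ => φ (x.1 + w' • w.1)) 0 ![1, 1] +
      iteratedFDeriv ℝ 2 (fun w' : ℂ => φ (x.1 + w' • w.1)) 0 ![I, I] := hφL x.1 hx1 w.1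
  have hQ : ‖w.2‖ ^ 2 ≤ iteratedFDeriv ℝ 2 (fun w' : ℂ => ψ (x.2 + w' • w.2)) 0 ![1, 1] +
      iteratedFDeriv ℝ 2 (fun w' : ℂ => ψ (x.2 + w' • w.2)) 0 ![I, I] := hψL x.2 hx2 w.2
  have hφ1 := abs_le.mp (hφb x.1 hx1)
  have hψ1 := abs_le.mp (hψb x.2 hx2)
  have hn1 : (0:ℝ) ≤ ‖w.1‖ := norm_nonneg _
  have hn2 : (0:ℝ) ≤ ‖w.2‖ := norm_nonneg _
  constructor
  · -- first function
    have hcf : ContDiffOn ℝ 2 (fun w' : ℂ => φ (x.1 + w' • w.1) + A) s :=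
      hc1.add contDiffOn_const
    have hcg : ContDiffOn ℝ 2 (fun w' : ℂ => ψ (x.2 + w' • w.2) + A) s :=
      hc2.add contDiffOn_const
    have dphi : fderiv ℝ (fun w' : ℂ => φ (x.1 + w' • w.1) + A) 0 =
        fderiv ℝ (fun w' : ℂ => φ (x.1 + w' • w.1)) 0 := fderiv_add_const A
    have dpsi : fderiv ℝ (fun w' : ℂ => ψ (x.2 + w' • w.2) + A) 0 =
        fderiv ℝ (fun w' : ℂ => ψ (x.2 + w' • w.2)) 0 := fderiv_add_const A
    have Lp1 : iteratedFDeriv ℝ 2 (fun w' : ℂ => φ (x.1 + w' • w.1) + A) 0 ![1, 1] =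
        iteratedFDeriv ℝ 2 (fun w' : ℂ => φ (x.1 + w' • w.1)) 0 ![1, 1] :=
      lap_add_const _ A _
    have LpI : iteratedFDeriv ℝ 2 (fun w' : ℂ => φ (x.1 + w' • w.1) + A) 0 ![I, I] =
        iteratedFDeriv ℝ 2 (fun w' : ℂ => φ (x.1 + w' • w.1)) 0 ![I, I] :=
      lap_add_const _ A _
    have Lq1 : iteratedFDeriv ℝ 2 (fun w' : ℂ => ψ (x.2 + w' • w.2) + A) 0 ![1, 1] =
        iteratedFDeriv ℝ 2 (fun w' : ℂ => ψ (x.2 + w' • w.2)) 0 ![1, 1] :=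
      lap_add_const _ A _
    have LqI : iteratedFDeriv ℝ 2 (fun w' : ℂ => ψ (x.2 + w' • w.2) + A) 0 ![I, I] =
        iteratedFDeriv ℝ 2 (fun w' : ℂ => ψ (x.2 + w' • w.2)) 0 ![I, I] :=
      lap_add_const _ A _
    have H1 : iteratedFDeriv ℝ 2
          (fun w' : ℂ => (φ (x.1 + w' • w.1) + A) * (ψ (x.2 + w' • w.2) + A)) 0 ![1, 1]
        = (φ (x.1 + (0:ℂ) • w.1) + A) *
            iteratedFDeriv ℝ 2 (fun w' : ℂ => ψ (x.2 + w' • w.2) + A) 0 ![1, 1]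
          + (ψ (x.2 + (0:ℂ) • w.2) + A) *
            iteratedFDeriv ℝ 2 (fun w' : ℂ => φ (x.1 + w' • w.1) + A) 0 ![1, 1]
          + 2 * (fderiv ℝ (fun w' : ℂ => φ (x.1 + w' • w.1) + A) 0 1 *
              fderiv ℝ (fun w' : ℂ => ψ (x.2 + w' • w.2) + A) 0 1) :=
      second_mul _ _ s hs h0 hcf hcg 1
    have HI : iteratedFDeriv ℝ 2
          (fun w' : ℂ => (φ (x.1 + w' • w.1) + A) * (ψ (x.2 + w' • w.2) + A)) 0 ![I, I]
        = (φ (x.1 + (0:ℂ) • w.1) + A) *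
            iteratedFDeriv ℝ 2 (fun w' : ℂ => ψ (x.2 + w' • w.2) + A) 0 ![I, I]
          + (ψ (x.2 + (0:ℂ) • w.2) + A) *
            iteratedFDeriv ℝ 2 (fun w' : ℂ => φ (x.1 + w' • w.1) + A) 0 ![I, I]
          + 2 * (fderiv ℝ (fun w' : ℂ => φ (x.1 + w' • w.1) + A) 0 I *
              fderiv ℝ (fun w' : ℂ => ψ (x.2 + w' • w.2) + A) 0 I) :=
      second_mul _ _ s hs h0 hcf hcg I
    rw [dphi, dpsi, Lp1, Lq1, e1, e2] at H1
    rw [dphi, dpsi, LpI, LqI, eI1, eI2] at HI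
    simp only [zero_smul, add_zero] at H1 HI
    show 0 ≤ iteratedFDeriv ℝ 2
          (fun w' : ℂ => (φ ((x + w' • w).1) + A) * (ψ ((x + w' • w).2) + A)) 0 ![1, 1]
        + iteratedFDeriv ℝ 2
          (fun w' : ℂ => (φ ((x + w' • w).1) + A) * (ψ ((x + w' • w).2) + A)) 0 ![I, I]
    simp only [Prod.fst_add, Prod.snd_add, Prod.smul_fst, Prod.smul_snd]
    rw [H1, HI]
    have c1 : K ^ 2 ≤ φ x.1 + A := by linarith
    have c2 : K ^ 2 ≤ ψ x.2 + A := by linarith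
    have hQ0 : (0:ℝ) ≤ iteratedFDeriv ℝ 2 (fun w' : ℂ => ψ (x.2 + w' • w.2)) 0 ![1, 1] +
        iteratedFDeriv ℝ 2 (fun w' : ℂ => ψ (x.2 + w' • w.2)) 0 ![I, I] :=
      le_trans (sq_nonneg _) hQ
    have hP0 : (0:ℝ) ≤ iteratedFDeriv ℝ 2 (fun w' : ℂ => φ (x.1 + w' • w.1)) 0 ![1, 1] +
        iteratedFDeriv ℝ 2 (fun w' : ℂ => φ (x.1 + w' • w.1)) 0 ![I, I] :=
      le_trans (sq_nonneg _) hP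
    nlinarith [mul_nonneg (by linarith : (0:ℝ) ≤ φ x.1 + A - K ^ 2) hQ0,
      mul_nonneg (by linarith : (0:ℝ) ≤ ψ x.2 + A - K ^ 2) hP0,
      mul_le_mul_of_nonneg_left hQ (sq_nonneg K),
      mul_le_mul_of_nonneg_left hP (sq_nonneg K),
      sq_nonneg (‖w.1‖ - ‖w.2‖), hcr.1, sq_nonneg K]
  · -- second function
    have hcf : ContDiffOn ℝ 2 (fun w' : ℂ => -φ (x.1 + w' • w.1) + A) s :=
      hc1.neg.add contDiffOn_const
    have hcg : ContDiffOn ℝ 2 (fun w' : ℂ => ψ (x.2 + w' • w.2) - A) s :=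
      hc2.sub contDiffOn_const
    have dphi : fderiv ℝ (fun w' : ℂ => -φ (x.1 + w' • w.1) + A) 0 =
        -fderiv ℝ (fun w' : ℂ => φ (x.1 + w' • w.1)) 0 := by
      rw [fderiv_add_const, fderiv_fun_neg]
    have dpsi : fderiv ℝ (fun w' : ℂ => ψ (x.2 + w' • w.2) - A) 0 =
        fderiv ℝ (fun w' : ℂ => ψ (x.2 + w' • w.2)) 0 := fderiv_sub_const A
    have Lp1 : iteratedFDeriv ℝ 2 (fun w' : ℂ => -φ (x.1 + w' • w.1) + A) 0 ![1, 1] =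
        -iteratedFDeriv ℝ 2 (fun w' : ℂ => φ (x.1 + w' • w.1)) 0 ![1, 1] :=
      lap_neg_add_const _ A _
    have LpI : iteratedFDeriv ℝ 2 (fun w' : ℂ => -φ (x.1 + w' • w.1) + A) 0 ![I, I] =
        -iteratedFDeriv ℝ 2 (fun w' : ℂ => φ (x.1 + w' • w.1)) 0 ![I, I] :=
      lap_neg_add_const _ A _
    have Lq1 : iteratedFDeriv ℝ 2 (fun w' : ℂ => ψ (x.2 + w' • w.2) - A) 0 ![1, 1] =
        iteratedFDeriv ℝ 2 (fun w' : ℂ => ψ (x.2 + w' • w.2)) 0 ![1, 1] :=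
      lap_sub_const _ A _
    have LqI : iteratedFDeriv ℝ 2 (fun w' : ℂ => ψ (x.2 + w' • w.2) - A) 0 ![I, I] =
        iteratedFDeriv ℝ 2 (fun w' : ℂ => ψ (x.2 + w' • w.2)) 0 ![I, I] :=
      lap_sub_const _ A _
    have H1 : iteratedFDeriv ℝ 2
          (fun w' : ℂ => (-φ (x.1 + w' • w.1) + A) * (ψ (x.2 + w' • w.2) - A)) 0 ![1, 1]
        = (-φ (x.1 + (0:ℂ) • w.1) + A) *
            iteratedFDeriv ℝ 2 (fun w' : ℂ => ψ (x.2 + w' • w.2) - A) 0 ![1, 1]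
          + (ψ (x.2 + (0:ℂ) • w.2) - A) *
            iteratedFDeriv ℝ 2 (fun w' : ℂ => -φ (x.1 + w' • w.1) + A) 0 ![1, 1]
          + 2 * (fderiv ℝ (fun w' : ℂ => -φ (x.1 + w' • w.1) + A) 0 1 *
              fderiv ℝ (fun w' : ℂ => ψ (x.2 + w' • w.2) - A) 0 1) :=
      second_mul _ _ s hs h0 hcf hcg 1
    have HI : iteratedFDeriv ℝ 2
          (fun w' : ℂ => (-φ (x.1 + w' • w.1) + A) * (ψ (x.2 + w' • w.2) - A)) 0 ![I, I]
        = (-φ (x.1 + (0:ℂ) • w.1) + A) *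
            iteratedFDeriv ℝ 2 (fun w' : ℂ => ψ (x.2 + w' • w.2) - A) 0 ![I, I]
          + (ψ (x.2 + (0:ℂ) • w.2) - A) *
            iteratedFDeriv ℝ 2 (fun w' : ℂ => -φ (x.1 + w' • w.1) + A) 0 ![I, I]
          + 2 * (fderiv ℝ (fun w' : ℂ => -φ (x.1 + w' • w.1) + A) 0 I *
              fderiv ℝ (fun w' : ℂ => ψ (x.2 + w' • w.2) - A) 0 I) :=
      second_mul _ _ s hs h0 hcf hcg I
    rw [dphi, dpsi, Lp1, Lq1] at H1
    rw [dphi, dpsi, LpI, LqI] at HI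
    simp only [ContinuousLinearMap.neg_apply] at H1 HI
    rw [e1, e2] at H1
    rw [eI1, eI2] at HI
    simp only [zero_smul, add_zero] at H1 HI
    show 0 ≤ iteratedFDeriv ℝ 2
          (fun w' : ℂ => (-φ ((x + w' • w).1) + A) * (ψ ((x + w' • w).2) - A)) 0 ![1, 1]
        + iteratedFDeriv ℝ 2
          (fun w' : ℂ => (-φ ((x + w' • w).1) + A) * (ψ ((x + w' • w).2) - A)) 0 ![I, I]
    simp only [Prod.fst_add, Prod.snd_add, Prod.smul_fst, Prod.smul_snd]
    rw [H1, HI]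
    have c1 : K ^ 2 ≤ -φ x.1 + A := by linarith
    have c2 : ψ x.2 - A ≤ -K ^ 2 := by linarith
    have hQ0 : (0:ℝ) ≤ iteratedFDeriv ℝ 2 (fun w' : ℂ => ψ (x.2 + w' • w.2)) 0 ![1, 1] +
        iteratedFDeriv ℝ 2 (fun w' : ℂ => ψ (x.2 + w' • w.2)) 0 ![I, I] :=
      le_trans (sq_nonneg _) hQ
    have hP0 : (0:ℝ) ≤ iteratedFDeriv ℝ 2 (fun w' : ℂ => φ (x.1 + w' • w.1)) 0 ![1, 1] +
        iteratedFDeriv ℝ 2 (fun w' : ℂ => φ (x.1 + w' • w.1)) 0 ![I, I] :=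
      le_trans (sq_nonneg _) hP
    nlinarith [mul_nonneg (by linarith : (0:ℝ) ≤ -φ x.1 + A - K ^ 2) hQ0,
      mul_nonneg (by linarith : (0:ℝ) ≤ -(ψ x.2 - A) - K ^ 2) hP0,
      mul_le_mul_of_nonneg_left hQ (sq_nonneg K),
      mul_le_mul_of_nonneg_left hP (sq_nonneg K),
      sq_nonneg (‖w.1‖ - ‖w.2‖), hcr.2, sq_nonneg K]
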